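/- Let F be a field, A ∈ F^{n×n}, u, v ∈ F^n, and let f^A be the minimal polynomial of A. Let f_u^{A,v} be the minimal generating polynomial of the sequence (u^T A^i v)_{i≥0} and ρ_u^{A,v} its residue. Then for every r ∈ F with f^A(r) ≠ 0, the matrix r I_n − A is invertible, f_u^{A,v}(r) ≠ 0, and u^T (r I_n − A)^{−1} v = ρ_u^{A,v}(r) / f_u^{A,v}(r). -/

import Mathlib

open Matrix

/-- `f` annihilates the sequence `a`: writing `f = Σ_{j=0}^m f_j λ^j` with
`m = deg f`, we have `Σ_{j=0}^m f_j a_{i+j} = 0` for all `i ≥ 0`. -/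
def AnnihilatesSeq {F : Type*} [Field F] (f : Polynomial F) (a : ℕ → F) : Prop :=
  ∀ i : ℕ, ∑ j ∈ Finset.range (f.natDegree + 1), f.coeff j * a (i + j) = 0

/-- `f` is the minimal generating polynomial of the sequence `a`: the monic
polynomial of least degree annihilating `a`. -/
def IsMinGenPoly {F : Type*} [Field F] (f : Polynomial F) (a : ℕ → F) : Prop :=
  f.Monic ∧ AnnihilatesSeq f a ∧
    ∀ g : Polynomial F, g.Monic → AnnihilatesSeq g a → f.natDegree ≤ g.natDegree

/-- The residue of a linearly generated sequence `a` with respect to its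
generator `f` of degree `m`:
`ρ(λ) = Σ_{k=0}^{m−1} ( Σ_{i=0}^{m−1−k} f_{k+1+i} a_i ) λ^k`. -/
noncomputable def seqResidue {F : Type*} [Field F] (f : Polynomial F) (a : ℕ → F) :
    Polynomial F :=
  ∑ k ∈ Finset.range f.natDegree,
    Polynomial.C (∑ i ∈ Finset.range (f.natDegree - k), f.coeff (k + 1 + i) * a i) *
      Polynomial.X ^ k

section Helpers

open Polynomial Finset

variable {F : Type*} [Field F] {n : ℕ} (A : Matrix (Fin n) (Fin n) F) (u v : Fin n → F)

private lemma dot_sum {ι : Type*} (s : Finset ι) (M : ι → Matrix (Fin n) (Fin n) F) :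
    u ⬝ᵥ (∑ j ∈ s, M j).mulVec v = ∑ j ∈ s, u ⬝ᵥ (M j).mulVec v := by
  classical
  induction s using Finset.cons_induction with
  | empty => simp
  | cons i s hi ih =>
    rw [Finset.sum_cons, Finset.sum_cons, Matrix.add_mulVec, dotProduct_add, ih]

private lemma dot_smul (c : F) (M : Matrix (Fin n) (Fin n) F) :
    u ⬝ᵥ (c • M).mulVec v = c * (u ⬝ᵥ M.mulVec v) := by
  rw [smul_mulVec, dotProduct_smul, smul_eq_mul]

private lemma aeval_expand (p : Polynomial F) :
    Polynomial.aeval A p = ∑ j ∈ Finset.range (p.natDegree + 1), p.coeff j • A ^ j := by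
  conv_lhs => rw [p.as_sum_range]
  rw [map_sum]
  refine Finset.sum_congr rfl fun j _ => ?_
  rw [aeval_monomial, Algebra.algebraMap_eq_smul_one, smul_mul_assoc, one_mul]

private lemma dot_shift (g : Polynomial F) (i : ℕ) :
    u ⬝ᵥ (A ^ i * Polynomial.aeval A g).mulVec v
      = ∑ j ∈ Finset.range (g.natDegree + 1), g.coeff j * (u ⬝ᵥ (A ^ (i + j)).mulVec v) := by
  rw [aeval_expand, Finset.mul_sum, dot_sum]
  refine Finset.sum_congr rfl fun j _ => ?_
  rw [mul_smul_comm, ← pow_add, dot_smul]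

private lemma ann_iff (g : Polynomial F) :
    AnnihilatesSeq g (fun i => u ⬝ᵥ (A ^ i).mulVec v)
      ↔ ∀ i, u ⬝ᵥ (A ^ i * Polynomial.aeval A g).mulVec v = 0 := by
  constructor
  · intro h i
    rw [dot_shift]
    exact h i
  · intro h i
    have := h i
    rw [dot_shift] at this
    exact this

private lemma dot_mul_eq_zero {f : Polynomial F}
    (hf : ∀ i, u ⬝ᵥ (A ^ i * Polynomial.aeval A f).mulVec v = 0)
    (p : Polynomial F) (i : ℕ) :
    u ⬝ᵥ (A ^ i * Polynomial.aeval A (p * f)).mulVec v = 0 := by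
  have h1 : A ^ i * Polynomial.aeval A (p * f)
      = ∑ j ∈ Finset.range (p.natDegree + 1),
          p.coeff j • (A ^ (i + j) * Polynomial.aeval A f) := by
    rw [_root_.map_mul, ← mul_assoc, aeval_expand A p, Finset.mul_sum, Finset.sum_mul]
    refine Finset.sum_congr rfl fun j _ => ?_
    rw [mul_smul_comm, ← pow_add, smul_mul_assoc]
  rw [h1, dot_sum]
  simp [dot_smul, hf]

private lemma f_dvd_minpoly {f : Polynomial F}
    (hf : IsMinGenPoly f (fun i => u ⬝ᵥ (A ^ i).mulVec v)) :
    f ∣ minpoly F A := by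
  obtain ⟨hmonic, hann, hmin⟩ := hf
  have hfd : ∀ i, u ⬝ᵥ (A ^ i * Polynomial.aeval A f).mulVec v = 0 :=
    (ann_iff A u v f).mp hann
  have hμann : ∀ i, u ⬝ᵥ (A ^ i * Polynomial.aeval A (minpoly F A)).mulVec v = 0 := by
    intro i
    rw [minpoly.aeval]
    simp
  set s := minpoly F A %ₘ f with hs
  have hsann : ∀ i, u ⬝ᵥ (A ^ i * Polynomial.aeval A s).mulVec v = 0 := by
    intro i
    have hdecomp : s = minpoly F A - (minpoly F A /ₘ f) * f := by
      have hh := modByMonic_add_div (minpoly F A) f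
      rw [hs]
      linear_combination hh
    rw [hdecomp, map_sub, mul_sub, Matrix.sub_mulVec, dotProduct_sub, hμann i,
      dot_mul_eq_zero A u v hfd _ i, sub_zero]
  by_cases hs0 : s = 0
  · exact (modByMonic_eq_zero_iff_dvd hmonic).mp hs0
  · exfalso
    have hm' : (s * C s.leadingCoeff⁻¹).Monic := monic_mul_leadingCoeff_inv hs0
    have hann' : AnnihilatesSeq (s * C s.leadingCoeff⁻¹)
        (fun i => u ⬝ᵥ (A ^ i).mulVec v) := by
      rw [ann_iff]
      intro i
      rw [_root_.map_mul, aeval_C, Algebra.algebraMap_eq_smul_one, mul_smul_comm, mul_one,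
        mul_smul_comm, dot_smul, hsann i, mul_zero]
    have hdeg : f.natDegree ≤ s.natDegree := by
      have := hmin _ hm' hann'
      rwa [natDegree_mul_leadingCoeff_inv s hs0] at this
    have hlt : s.natDegree < f.natDegree :=
      natDegree_lt_natDegree hs0 (degree_modByMonic_lt (minpoly F A) hmonic)
    omega

end Helpers

/-- For every `r` with `f^A(r) ≠ 0` (`f^A` the minimal polynomial of `A`),
the matrix `r I_n − A` is invertible, `f_u^{A,v}(r) ≠ 0`, and
`u^T (r I_n − A)^{−1} v = ρ_u^{A,v}(r) / f_u^{A,v}(r)`. -/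
theorem dot_inv_eq_residue_div (F : Type*) [Field F] (n : ℕ)
    (A : Matrix (Fin n) (Fin n) F) (u v : Fin n → F) (f : Polynomial F)
    (hf : IsMinGenPoly f fun i => u ⬝ᵥ (A ^ i).mulVec v)
    (r : F) (hr : (minpoly F A).eval r ≠ 0) :
    IsUnit (r • (1 : Matrix (Fin n) (Fin n) F) - A) ∧
    f.eval r ≠ 0 ∧
    u ⬝ᵥ (r • (1 : Matrix (Fin n) (Fin n) F) - A)⁻¹.mulVec v =
      (seqResidue f fun i => u ⬝ᵥ (A ^ i).mulVec v).eval r / f.eval r := by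
  classical
  open Polynomial Finset in
  set μ := minpoly F A with hμdef
  set c := μ.eval r with hcdef
  set M := r • (1 : Matrix (Fin n) (Fin n) F) - A with hMdef
  -- invertibility
  obtain ⟨w, hw⟩ : (X : Polynomial F) - C r ∣ μ - C c := X_sub_C_dvd_sub_C_eval
  have hwA : -(c • (1 : Matrix (Fin n) (Fin n) F))
      = (A - r • 1) * Polynomial.aeval A w := by
    have h0 := congrArg (Polynomial.aeval A) hw
    rw [map_sub, _root_.map_mul, map_sub, aeval_X, aeval_C, aeval_C, minpoly.aeval,
      Algebra.algebraMap_eq_smul_one, Algebra.algebraMap_eq_smul_one, zero_sub] at h0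
    exact h0
  have hright : M * Polynomial.aeval A w = c • (1 : Matrix (Fin n) (Fin n) F) := by
    have hM' : M = -(A - r • 1) := by rw [hMdef, neg_sub]
    rw [hM', neg_mul, ← hwA, neg_neg]
  have hunit_eq : M * (c⁻¹ • Polynomial.aeval A w) = 1 := by
    rw [mul_smul_comm, hright, smul_smul, inv_mul_cancel₀ hr, one_smul]
  have hU : IsUnit M := (Matrix.isUnit_iff_isUnit_det M).mpr (Matrix.isUnit_det_of_right_inverse hunit_eq)
  have hMinv : M⁻¹ = c⁻¹ • Polynomial.aeval A w := Matrix.inv_eq_right_inv hunit_eq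
  -- f divides minpoly, so f.eval r ≠ 0
  obtain ⟨h, hμeq⟩ := f_dvd_minpoly A u v hf
  have hfr : f.eval r ≠ 0 := by
    intro h0
    apply hr
    rw [hcdef, show μ = f * h from hμeq, Polynomial.eval_mul, h0, zero_mul]
  refine ⟨hU, hfr, ?_⟩
  -- the main identity
  obtain ⟨hmonic, hann, -⟩ := hf
  have hfd : ∀ i, u ⬝ᵥ (A ^ i * Polynomial.aeval A f).mulVec v = 0 :=
    (ann_iff A u v f).mp hann
  set P : Polynomial F := C c⁻¹ * w with hPdef
  clear_value P
  have hPA : M⁻¹ = Polynomial.aeval A P := by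
    rw [hMinv, hPdef, _root_.map_mul, aeval_C, Algebra.algebraMap_eq_smul_one, smul_mul_assoc, one_mul]
  set m := f.natDegree with hmdef
  clear_value m
  set Q : Polynomial F :=
    ∑ j ∈ Finset.range (m + 1), C (f.coeff j) * ∑ i ∈ Finset.range j,
      X ^ i * C r ^ (j - 1 - i) with hQdef
  clear_value Q
  have hf' : f = ∑ j ∈ Finset.range (m + 1), C (f.coeff j) * X ^ j := by
    rw [hmdef]
    exact f.as_sum_range_C_mul_X_pow
  have he : C (f.eval r) = ∑ j ∈ Finset.range (m + 1), C (f.coeff j) * C r ^ j := by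
    rw [hmdef, Polynomial.eval_eq_sum_range, _root_.map_sum]
    exact Finset.sum_congr rfl fun j _ => by rw [_root_.map_mul, _root_.map_pow]
  have hQ : Q * (X - C r) = f - C (f.eval r) := by
    have h2 : Q * (X - C r) = ∑ j ∈ Finset.range (m + 1),
        (C (f.coeff j) * X ^ j - C (f.coeff j) * C r ^ j) := by
      rw [hQdef, Finset.sum_mul]
      refine Finset.sum_congr rfl fun j _ => ?_
      rw [mul_assoc, geom_sum₂_mul, mul_sub]
    rw [h2, Finset.sum_sub_distrib, ← hf', ← he]
  have hMrX : Polynomial.aeval A (C r - X) = M := by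
    rw [map_sub, aeval_X, aeval_C, Algebra.algebraMap_eq_smul_one, hMdef]
  have hMP : Polynomial.aeval A (C r - X) * Polynomial.aeval A P = 1 := by
    rw [hMrX, ← hPA]
    exact Matrix.mul_nonsing_inv M ((Matrix.isUnit_iff_isUnit_det M).mp hU)
  have hsplit : C (f.eval r) * P = Q * ((C r - X) * P) + P * f := by
    have h1 : C (f.eval r) - f = Q * (C r - X) := by
      have := hQ
      linear_combination this
    linear_combination P * h1
  have key : (u ⬝ᵥ M⁻¹.mulVec v) * f.eval r
      = u ⬝ᵥ (Polynomial.aeval A Q).mulVec v := by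
    rw [hPA, mul_comm, ← dot_smul]
    have hsm : f.eval r • Polynomial.aeval A P = Polynomial.aeval A (C (f.eval r) * P) := by
      rw [_root_.map_mul, aeval_C, Algebra.algebraMap_eq_smul_one, smul_mul_assoc, one_mul]
    rw [hsm, hsplit, map_add, _root_.map_mul, _root_.map_mul, hMP, mul_one, Matrix.add_mulVec,
      dotProduct_add]
    have hPf : u ⬝ᵥ (Polynomial.aeval A (P * f)).mulVec v = 0 := by
      have := dot_mul_eq_zero A u v hfd P 0
      simpa using this
    rw [hPf, add_zero]
  -- compute u^T Q(A) v
  have hQA : u ⬝ᵥ (Polynomial.aeval A Q).mulVec v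
      = ∑ j ∈ Finset.range (m + 1), ∑ i ∈ Finset.range j,
          (f.coeff j * r ^ (j - 1 - i)) * (u ⬝ᵥ (A ^ i).mulVec v) := by
    have expand : Polynomial.aeval A Q
        = ∑ j ∈ Finset.range (m + 1), ∑ i ∈ Finset.range j,
            (f.coeff j * r ^ (j - 1 - i)) • A ^ i := by
      rw [hQdef, map_sum]
      refine Finset.sum_congr rfl fun j _ => ?_
      rw [_root_.map_mul, map_sum, aeval_C, Finset.mul_sum]
      refine Finset.sum_congr rfl fun i _ => ?_
      rw [_root_.map_mul, map_pow, map_pow, aeval_X, aeval_C, Algebra.algebraMap_eq_smul_one,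
        Algebra.algebraMap_eq_smul_one, _root_.smul_pow, one_pow, mul_smul_comm, mul_one,
        smul_mul_assoc, one_mul, smul_smul]
    rw [expand, dot_sum]
    refine Finset.sum_congr rfl fun j _ => ?_
    rw [dot_sum]
    exact Finset.sum_congr rfl fun i _ => dot_smul u v _ _
  have hρ : (seqResidue f fun i => u ⬝ᵥ (A ^ i).mulVec v).eval r
      = ∑ k ∈ Finset.range m, ∑ i ∈ Finset.range (m - k),
          (f.coeff (k + 1 + i) * (u ⬝ᵥ (A ^ i).mulVec v)) * r ^ k := by
    rw [hmdef, seqResidue, Polynomial.eval_finset_sum]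
    refine Finset.sum_congr rfl fun k _ => ?_
    rw [Polynomial.eval_mul, Polynomial.eval_C, Polynomial.eval_pow, Polynomial.eval_X,
      Finset.sum_mul]
  have hreindex : ∑ j ∈ Finset.range (m + 1), ∑ i ∈ Finset.range j,
          (f.coeff j * r ^ (j - 1 - i)) * (u ⬝ᵥ (A ^ i).mulVec v)
      = ∑ k ∈ Finset.range m, ∑ i ∈ Finset.range (m - k),
          (f.coeff (k + 1 + i) * (u ⬝ᵥ (A ^ i).mulVec v)) * r ^ k := by
    rw [Finset.sum_sigma', Finset.sum_sigma']
    refine Finset.sum_nbij' (fun x => ⟨x.1 - 1 - x.2, x.2⟩) (fun y => ⟨y.1 + 1 + y.2, y.2⟩)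
      ?_ ?_ ?_ ?_ ?_
    · rintro ⟨j, i⟩ hx
      simp only [Finset.mem_sigma, Finset.mem_range] at hx ⊢
      omega
    · rintro ⟨k, i⟩ hy
      simp only [Finset.mem_sigma, Finset.mem_range] at hy ⊢
      omega
    · rintro ⟨j, i⟩ hx
      simp only [Finset.mem_sigma, Finset.mem_range] at hx
      have hji : j - 1 - i + 1 + i = j := by omega
      simp [hji]
    · rintro ⟨k, i⟩ hy
      simp only [Finset.mem_sigma, Finset.mem_range] at hy
      have hki : k + 1 + i - 1 - i = k := by omega
      simp [hki]
    · rintro ⟨j, i⟩ hx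
      simp only [Finset.mem_sigma, Finset.mem_range] at hx
      have hji : j - 1 - i + 1 + i = j := by omega
      simp only [hji]
      ring
  rw [eq_div_iff hfr, key, hQA, hreindex, hρ]
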